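/- In the setting of the gl(2,ℂ) ⊕ t₂ double, the bilinear form determined by ⟨x^i, X_j⟩ = δ^i_j, ⟨F₂₁, F₁₂⟩ = 1, with s₊ and s₋ both isotropic and the form symmetric, is a nondegenerate invariant symmetric bilinear form on gl(2,ℂ) ⊕ t₂. -/

import Mathlib

open Matrix

/-- `gl(2,ℂ) ⊕ t₂`, realized as the associative algebra
`Matrix (Fin 2) (Fin 2) ℂ × (Fin 2 → ℂ)` with the commutator Lie bracket. -/
abbrev gl2t2 : Type := Matrix (Fin 2) (Fin 2) ℂ × (Fin 2 → ℂ)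

noncomputable def Hgl (i : Fin 2) : gl2t2 := (Matrix.single i i 1, 0)

def Igl (i : Fin 2) : gl2t2 := (0, Pi.single i 1)

noncomputable def Fgl (i j : Fin 2) : gl2t2 := (Matrix.single i j 1, 0)

/-- `X_i := (H_i + i·I_i)/√2`. -/
noncomputable def Xgl (i : Fin 2) : gl2t2 :=
  ((Real.sqrt 2 : ℂ))⁻¹ • (Hgl i + Complex.I • Igl i)

/-- `x^i := (H_i − i·I_i)/√2`. -/
noncomputable def xgl (i : Fin 2) : gl2t2 :=
  ((Real.sqrt 2 : ℂ))⁻¹ • (Hgl i - Complex.I • Igl i)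

lemma hc2 : ((Real.sqrt 2 : ℂ)) * ((Real.sqrt 2 : ℂ)) = 2 := by
  have h : Real.sqrt 2 * Real.sqrt 2 = 2 := Real.mul_self_sqrt (by norm_num)
  exact_mod_cast congrArg Complex.ofReal h

lemma hc0 : ((Real.sqrt 2 : ℂ)) ≠ 0 := by
  intro h
  have := hc2
  rw [h] at this
  norm_num at this

lemma Hgl_eq (i : Fin 2) : Hgl i =
    ((Real.sqrt 2 : ℂ)/2) • Xgl i + ((Real.sqrt 2 : ℂ)/2) • xgl i := by
  unfold Xgl xgl
  match_scalars <;> field_simp <;> ring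

lemma Igl_eq (i : Fin 2) : Igl i =
    (-(Complex.I * (Real.sqrt 2 : ℂ))/2) • Xgl i + ((Complex.I * (Real.sqrt 2 : ℂ))/2) • xgl i := by
  unfold Xgl xgl
  match_scalars
  all_goals field_simp
  all_goals first | ring1 | (rw [Complex.I_sq]; ring)

lemma decomp (a : gl2t2) : a = a.1 0 0 • Hgl 0 + a.1 1 1 • Hgl 1 + a.1 0 1 • Fgl 0 1
    + a.1 1 0 • Fgl 1 0 + a.2 0 • Igl 0 + a.2 1 • Igl 1 := by
  refine Prod.ext ?_ ?_
  · ext i j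
    fin_cases i <;> fin_cases j <;>
      simp [Hgl, Fgl, Igl, Matrix.single]
  · funext i
    fin_cases i <;> simp [Hgl, Fgl, Igl, Pi.single, Function.update]

lemma gl2_key_nondeg (Φ : LinearMap.BilinForm ℂ gl2t2)
    (key : ∀ a b : gl2t2, Φ a b =
      a.1 0 0 * b.1 0 0 + a.1 1 1 * b.1 1 1 + a.1 0 1 * b.1 1 0 + a.1 1 0 * b.1 0 1
        + a.2 0 * b.2 0 + a.2 1 * b.2 1) : Φ.Nondegenerate := by
  suffices hL : LinearMap.SeparatingLeft Φ from
    ⟨hL, fun a ha => hL a fun y => by rw [← ha y, key, key]; ring⟩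
  intro a ha
  have h00 := (key a (Hgl 0)).symm.trans (ha (Hgl 0))
  have h11 := (key a (Hgl 1)).symm.trans (ha (Hgl 1))
  have h01 := (key a (Fgl 1 0)).symm.trans (ha (Fgl 1 0))
  have h10 := (key a (Fgl 0 1)).symm.trans (ha (Fgl 0 1))
  have hv0 := (key a (Igl 0)).symm.trans (ha (Igl 0))
  have hv1 := (key a (Igl 1)).symm.trans (ha (Igl 1))
  clear key ha
  simp [Hgl, Fgl, Igl] at h00 h11 h01 h10 hv0 hv1
  refine Prod.ext ?_ ?_
  · ext i j
    fin_cases i <;> fin_cases j <;> simp_all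
  · funext i
    fin_cases i <;> simp_all

lemma gl2_key_inv (Φ : LinearMap.BilinForm ℂ gl2t2)
    (key : ∀ a b : gl2t2, Φ a b =
      a.1 0 0 * b.1 0 0 + a.1 1 1 * b.1 1 1 + a.1 0 1 * b.1 1 0 + a.1 1 0 * b.1 0 1
        + a.2 0 * b.2 0 + a.2 1 * b.2 1) :
    ∀ a b c : gl2t2, Φ ⁅a, b⁆ c = Φ a ⁅b, c⁆ := by
  intro a b c
  rw [key, key]
  simp only [Ring.lie_def, Prod.fst_sub, Prod.snd_sub, Prod.fst_mul, Prod.snd_mul,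
    Matrix.sub_apply, Pi.sub_apply, Pi.mul_apply, Matrix.mul_apply, Fin.sum_univ_two]
  ring

/-- the symmetric bilinear form on `gl(2,ℂ) ⊕ t₂` determined by
`⟨x^i, X_j⟩ = δ^i_j`, `⟨F₂₁, F₁₂⟩ = 1`, with `s₊ = span{X₁,X₂,F₁₂}` and
`s₋ = span{x¹,x²,F₂₁}` both isotropic, is nondegenerate and invariant. -/
theorem gl2_double_pairing (Φ : LinearMap.BilinForm ℂ gl2t2)
    (hsymm : ∀ a b, Φ a b = Φ b a)
    (hXX : ∀ i j, Φ (Xgl i) (Xgl j) = 0)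
    (hXF : ∀ i, Φ (Xgl i) (Fgl 0 1) = 0)
    (hFF : Φ (Fgl 0 1) (Fgl 0 1) = 0)
    (hxx : ∀ i j, Φ (xgl i) (xgl j) = 0)
    (hxf : ∀ i, Φ (xgl i) (Fgl 1 0) = 0)
    (hff : Φ (Fgl 1 0) (Fgl 1 0) = 0)
    (hpair : ∀ i j, Φ (xgl i) (Xgl j) = if i = j then 1 else 0)
    (hxF : ∀ i, Φ (xgl i) (Fgl 0 1) = 0)
    (hfX : ∀ j, Φ (Fgl 1 0) (Xgl j) = 0)
    (hfF : Φ (Fgl 1 0) (Fgl 0 1) = 1) :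
    Φ.Nondegenerate ∧ ∀ a b c : gl2t2, Φ ⁅a, b⁆ c = Φ a ⁅b, c⁆ := by
  have hXx : ∀ i j, Φ (Xgl i) (xgl j) = if j = i then 1 else 0 := fun i j => by
    rw [hsymm]; exact hpair j i
  have hXf : ∀ i, Φ (Xgl i) (Fgl 1 0) = 0 := fun i => by rw [hsymm]; exact hfX i
  have hFX : ∀ j, Φ (Fgl 0 1) (Xgl j) = 0 := fun j => by rw [hsymm]; exact hXF j
  have hFx : ∀ j, Φ (Fgl 0 1) (xgl j) = 0 := fun j => by rw [hsymm]; exact hxF j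
  have hFf : Φ (Fgl 0 1) (Fgl 1 0) = 1 := by rw [hsymm]; exact hfF
  have ΦHH : ∀ i j, Φ (Hgl i) (Hgl j) = if i = j then 1 else 0 := by
    intro i j
    rw [Hgl_eq i, Hgl_eq j]
    simp only [map_add, _root_.map_smul, LinearMap.add_apply, LinearMap.smul_apply, smul_eq_mul,
      hXX, hxx, hpair, hXx, mul_zero, add_zero, zero_add]
    by_cases h : i = j
    · subst h; simp; linear_combination (1/2:ℂ)*hc2
    · simp [h, Ne.symm h]
  have ΦII : ∀ i j, Φ (Igl i) (Igl j) = if i = j then 1 else 0 := by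
    intro i j
    rw [Igl_eq i, Igl_eq j]
    simp only [map_add, _root_.map_smul, LinearMap.add_apply, LinearMap.smul_apply, smul_eq_mul,
      hXX, hxx, hpair, hXx, mul_zero, add_zero, zero_add]
    by_cases h : i = j
    · subst h; simp; linear_combination (1/2:ℂ)*hc2 + (-(((Real.sqrt 2:ℝ):ℂ)^2)/2) * Complex.I_sq
    · simp [h, Ne.symm h]
  have ΦHI : ∀ i j, Φ (Hgl i) (Igl j) = 0 := by
    intro i j
    rw [Hgl_eq i, Igl_eq j]
    simp only [map_add, _root_.map_smul, LinearMap.add_apply, LinearMap.smul_apply, smul_eq_mul,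
      hXX, hxx, hpair, hXx, mul_zero, add_zero, zero_add]
    by_cases h : i = j
    · subst h; simp; ring
    · simp [h, Ne.symm h]
  have ΦIH : ∀ i j, Φ (Igl i) (Hgl j) = 0 := fun i j => by rw [hsymm]; exact ΦHI j i
  have ΦHF : ∀ i, Φ (Hgl i) (Fgl 0 1) = 0 := by
    intro i
    rw [Hgl_eq i]
    simp [map_add, _root_.map_smul, LinearMap.add_apply, LinearMap.smul_apply, hXF, hxF]
  have ΦHf : ∀ i, Φ (Hgl i) (Fgl 1 0) = 0 := by
    intro i
    rw [Hgl_eq i]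
    simp [map_add, _root_.map_smul, LinearMap.add_apply, LinearMap.smul_apply, hXf, hxf]
  have ΦIF : ∀ i, Φ (Igl i) (Fgl 0 1) = 0 := by
    intro i
    rw [Igl_eq i]
    simp [map_add, _root_.map_smul, LinearMap.add_apply, LinearMap.smul_apply, hXF, hxF]
  have ΦIf : ∀ i, Φ (Igl i) (Fgl 1 0) = 0 := by
    intro i
    rw [Igl_eq i]
    simp [map_add, _root_.map_smul, LinearMap.add_apply, LinearMap.smul_apply, hXf, hxf]
  have ΦFH : ∀ i, Φ (Fgl 0 1) (Hgl i) = 0 := fun i => by rw [hsymm]; exact ΦHF i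
  have ΦfH : ∀ i, Φ (Fgl 1 0) (Hgl i) = 0 := fun i => by rw [hsymm]; exact ΦHf i
  have ΦFI : ∀ i, Φ (Fgl 0 1) (Igl i) = 0 := fun i => by rw [hsymm]; exact ΦIF i
  have ΦfI : ∀ i, Φ (Fgl 1 0) (Igl i) = 0 := fun i => by rw [hsymm]; exact ΦIf i
  have key : ∀ a b : gl2t2, Φ a b =
      a.1 0 0 * b.1 0 0 + a.1 1 1 * b.1 1 1 + a.1 0 1 * b.1 1 0 + a.1 1 0 * b.1 0 1
        + a.2 0 * b.2 0 + a.2 1 * b.2 1 := by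
    intro a b
    conv_lhs => rw [decomp a, decomp b]
    simp only [map_add, _root_.map_smul, LinearMap.add_apply, LinearMap.smul_apply, smul_eq_mul,
      ΦHH, ΦII, ΦHI, ΦIH, ΦHF, ΦHf, ΦIF, ΦIf, ΦFH, ΦfH, ΦFI, ΦfI, hFF, hff, hfF, hFf,
      mul_zero, add_zero, zero_add, mul_one]
    norm_num
    ring
  exact ⟨gl2_key_nondeg Φ key, gl2_key_inv Φ key⟩
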